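/- Let Γ₁, …, Γₙ (n ≥ 2) be connected simple graphs each with at least two vertices, and suppose some factor Γ_j has a nontrivial vertex stabiliser: there exist u ∈ V(Γ_j) and α ∈ Aut(Γ_j) with α ≠ id and α(u) = u. Then the automorphism group of Γ = ⋆ᵢ Γᵢ (with the permutation topology on V(Γ)) is non-discrete; equivalently, for every k the pointwise stabiliser in Aut(Γ) of the ball of radius k around the base vertex ∅ is nontrivial. -/

import Mathlib

variable {ι : Type} [DecidableEq ι]

abbrev Letter (V : ι → Type) := Σ i, V i

def upd {V : ι → Type} (u : ∀ i, V i) : List (Letter V) → ∀ i, V i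
  | [] => u
  | ⟨j, x⟩ :: w => Function.update (upd u w) j x

def Adm {V : ι → Type} (u : ∀ i, V i) (w : List (Letter V)) : Prop :=
  w.Chain' (fun a b => a.1 ≠ b.1) ∧
    ∀ (a : Letter V) (p : List (Letter V)), a :: p <:+ w → a.2 ≠ upd u p a.1

def Word {V : ι → Type} (u : ∀ i, V i) := {w : List (Letter V) // Adm u w}

def emptyWord {V : ι → Type} (u : ∀ i, V i) : Word u :=
  ⟨[], List.isChain_nil, by intro a p h; simp at h⟩

def Pre {V : ι → Type} (G : ∀ i, SimpleGraph (V i)) (u : ∀ i, V i)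
    (v w : List (Letter V)) : Prop :=
  (∃ (p : List (Letter V)) (j : ι) (a b : V j),
      (G j).Adj a b ∧ v = ⟨j, a⟩ :: p ∧ w = ⟨j, b⟩ :: p) ∨
  (∃ (j : ι) (a : V j), (G j).Adj (upd u v j) a ∧ w = ⟨j, a⟩ :: v)

def freeProd {V : ι → Type} (G : ∀ i, SimpleGraph (V i)) (u : ∀ i, V i) :
    SimpleGraph (Word u) :=
  SimpleGraph.fromRel fun v w => Pre G u v.1 w.1

section Aux

variable {V : ι → Type} {u : ∀ i, V i}

lemma adm_suffix {w t : List (Letter V)} (h : Adm u w) (ht : t <:+ w) : Adm u t :=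
  ⟨h.1.suffix ht, fun a p hs => h.2 a p (hs.trans ht)⟩

lemma adm_tail {a : Letter V} {w : List (Letter V)} (h : Adm u (a :: w)) : Adm u w :=
  adm_suffix h (List.suffix_cons a w)

lemma adm_nil : Adm u ([] : List (Letter V)) :=
  ⟨List.isChain_nil, fun a p h => by simp at h⟩

lemma adm_cons {i : ι} {x : V i} {w : List (Letter V)} (hw : Adm u w)
    (hh : ∀ b ∈ w.head?, b.1 ≠ i) (hx : x ≠ upd u w i) : Adm u (⟨i, x⟩ :: w) := by
  constructor
  · exact List.isChain_cons.2 ⟨fun b hb => (hh b hb).symm, hw.1⟩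
  · intro a p hs
    rcases List.suffix_cons_iff.1 hs with h | h
    · obtain ⟨h1, h2⟩ : a = ⟨i, x⟩ ∧ p = w := by
        constructor <;> injection h
      subst h1; subst h2; exact hx
    · exact hw.2 a p h

lemma adm_head {i : ι} {x : V i} {w : List (Letter V)} (h : Adm u (⟨i, x⟩ :: w)) :
    x ≠ upd u w i :=
  h.2 ⟨i, x⟩ w (List.suffix_refl _)

lemma adm_head_fst {a : Letter V} {w : List (Letter V)} (h : Adm u (a :: w)) :
    ∀ b ∈ w.head?, b.1 ≠ a.1 :=
  fun b hb => ((List.isChain_cons.1 h.1).1 b hb).symm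

lemma upd_cons (i : ι) (x : V i) (w : List (Letter V)) :
    upd u (⟨i, x⟩ :: w) = Function.update (upd u w) i x := rfl

section fl

variable (j : ι)

/-- apply `β` to the `j`-component of a letter. -/
def fl (β : V j → V j) (a : Letter V) : Letter V :=
  if h : a.1 = j then ⟨j, β (h ▸ a.2)⟩ else a

@[simp] lemma fl_mk (β : V j → V j) (x : V j) : fl j β ⟨j, x⟩ = ⟨j, β x⟩ := by
  simp [fl]

lemma fl_ne (β : V j → V j) {a : Letter V} (h : a.1 ≠ j) : fl j β a = a := dif_neg h

@[simp] lemma fl_fst (β : V j → V j) (a : Letter V) : (fl j β a).1 = a.1 := by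
  obtain ⟨i, x⟩ := a
  by_cases h : i = j
  · subst h; simp
  · rw [fl_ne j β h]

lemma fl_comp (β β' : V j → V j) (a : Letter V) :
    fl j β' (fl j β a) = fl j (β' ∘ β) a := by
  obtain ⟨i, x⟩ := a
  by_cases h : i = j
  · subst h; simp
  · rw [fl_ne j β h, fl_ne j β' h, fl_ne j _ h]

lemma fl_id (a : Letter V) : fl j id a = a := by
  obtain ⟨i, x⟩ := a
  by_cases h : i = j
  · subst h; simp
  · exact fl_ne j _ h

open scoped Classical in
/-- apply `fl j β` to all letters of `w` strictly above the suffix `q₀`. -/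
noncomputable def FL (q₀ : List (Letter V)) (β : V j → V j) (w : List (Letter V)) :
    List (Letter V) :=
  if q₀ <:+ w then (w.take (w.length - q₀.length)).map (fl j β) ++ q₀ else w

variable (q₀ : List (Letter V)) (β : V j → V j)

lemma FL_append (r : List (Letter V)) :
    FL j q₀ β (r ++ q₀) = r.map (fl j β) ++ q₀ := by
  rw [FL, if_pos (List.suffix_append r q₀)]
  congr 2
  rw [List.length_append, Nat.add_sub_cancel, List.take_left]

lemma FL_of_not_suffix {w : List (Letter V)} (h : ¬ q₀ <:+ w) : FL j q₀ β w = w :=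
  if_neg h

lemma FL_q0 : FL j q₀ β q₀ = q₀ := by simpa using FL_append j q₀ β []

lemma FL_cons {p : List (Letter V)} (h : q₀ <:+ p) (c : Letter V) :
    FL j q₀ β (c :: p) = fl j β c :: FL j q₀ β p := by
  obtain ⟨r, rfl⟩ := h
  rw [FL_append, show c :: (r ++ q₀) = (c :: r) ++ q₀ from rfl, FL_append, List.map_cons,
    List.cons_append]

lemma FL_cons_not {p : List (Letter V)} (h : ¬ q₀ <:+ p) (c : Letter V) :
    FL j q₀ β (c :: p) = c :: p := by
  by_cases h2 : q₀ <:+ c :: p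
  · rcases List.suffix_cons_iff.1 h2 with h3 | h3
    · rw [h3, FL_q0]
    · exact absurd h3 h
  · exact FL_of_not_suffix j q₀ β h2

lemma FL_FL (β' : V j → V j) (w : List (Letter V)) :
    FL j q₀ β' (FL j q₀ β w) = FL j q₀ (β' ∘ β) w := by
  by_cases h : q₀ <:+ w
  · obtain ⟨r, rfl⟩ := h
    rw [FL_append, FL_append, FL_append, List.map_map]
    congr 1
    exact List.map_congr_left fun a _ => fl_comp j β β' a
  · rw [FL_of_not_suffix j q₀ β h, FL_of_not_suffix j q₀ β' h, FL_of_not_suffix j q₀ _ h]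

lemma FL_id (w : List (Letter V)) : FL j q₀ id w = w := by
  by_cases h : q₀ <:+ w
  · obtain ⟨r, rfl⟩ := h
    rw [FL_append]
    have : r.map (fl j id) = r := by
      simpa using List.map_congr_left fun (a : Letter V) (_ : a ∈ r) => fl_id j a
    rw [this]
  · exact FL_of_not_suffix j q₀ _ h

lemma upd_FL (hfix : β (upd u q₀ j) = upd u q₀ j) (s : List (Letter V)) :
    upd u (s.map (fl j β) ++ q₀) =
      Function.update (upd u (s ++ q₀)) j (β (upd u (s ++ q₀) j)) := by
  induction s with
  | nil =>
    simp only [List.map_nil, List.nil_append]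
    funext i
    by_cases h : i = j
    · subst h; rw [Function.update_self, hfix]
    · rw [Function.update_of_ne h]
  | cons a s ih =>
    obtain ⟨i0, x⟩ := a
    by_cases h : i0 = j
    · subst h
      simp only [List.map_cons, fl_mk, List.cons_append]
      rw [upd_cons, upd_cons, ih]
      rw [Function.update_idem, Function.update_self, Function.update_idem]
    · rw [List.map_cons, fl_ne j β (show (⟨i0, x⟩ : Letter V).1 ≠ j from h),
        List.cons_append, List.cons_append, upd_cons, upd_cons, ih,
        Function.update_of_ne (Ne.symm h), Function.update_comm h]

end fl

lemma suffix_append_split {γ : Type*} {y : List γ} :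
    ∀ {x t : List γ}, t <:+ x ++ y → t <:+ y ∨ ∃ x', x' <:+ x ∧ t = x' ++ y
  | [], t, h => Or.inl h
  | c :: x', t, h => by
    rcases List.suffix_cons_iff.1 h with h | h
    · exact Or.inr ⟨c :: x', List.suffix_refl _, h⟩
    · rcases suffix_append_split h with h | ⟨x'', hx, rfl⟩
      · exact Or.inl h
      · exact Or.inr ⟨x'', hx.trans (List.suffix_cons _ _), rfl⟩

lemma suffix_of_map {γ δ : Type*} (f : γ → δ) {l : List γ} {x : List δ}
    (h : x <:+ l.map f) : ∃ r, r <:+ l ∧ x = r.map f := by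
  obtain ⟨s, hs⟩ := h
  have hn : s.length ≤ l.length := by
    have := congrArg List.length hs
    simp at this
    omega
  refine ⟨l.drop s.length, List.drop_suffix _ _, ?_⟩
  rw [← List.take_append_drop s.length l, List.map_append] at hs
  have hlen : s.length = ((l.take s.length).map f).length := by
    simp [Nat.min_eq_left hn]
  exact List.append_inj_right hs hlen

end Aux
section Aux2

variable {V : ι → Type} {u : ∀ i, V i} (j : ι) (q₀ : List (Letter V)) (β : V j → V j)

lemma FL_map_fst (w : List (Letter V)) :
    (FL j q₀ β w).map Sigma.fst = w.map Sigma.fst := by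
  by_cases h : q₀ <:+ w
  · obtain ⟨r, rfl⟩ := h
    rw [FL_append, List.map_append, List.map_append, List.map_map]
    congr 1
    exact List.map_congr_left fun a _ => fl_fst j β a
  · rw [FL_of_not_suffix j q₀ β h]

lemma adm_FL (hfix : β (upd u q₀ j) = upd u q₀ j) (hinj : Function.Injective β)
    {w : List (Letter V)} (hw : Adm u w) : Adm u (FL j q₀ β w) := by
  by_cases h : q₀ <:+ w
  · obtain ⟨r, rfl⟩ := h
    rw [FL_append]
    constructor
    · have h1 : List.Chain' Ne ((r ++ q₀).map Sigma.fst) :=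
        (List.isChain_map Sigma.fst).2 hw.1
      have h2 : ((r.map (fl j β) ++ q₀)).map Sigma.fst = (r ++ q₀).map Sigma.fst := by
        have := FL_map_fst j q₀ β (r ++ q₀)
        rwa [FL_append] at this
      exact (List.isChain_map Sigma.fst).1 (h2 ▸ h1)
    · intro a p hs
      rcases suffix_append_split hs with hs | ⟨x', hx', heq⟩
      · exact hw.2 a p (hs.trans (List.suffix_append r q₀))
      · obtain ⟨r'', hr'', rfl⟩ := suffix_of_map (fl j β) hx'
        cases r'' with
        | nil =>
          simp only [List.map_nil, List.nil_append] at heq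
          have hsuf : a :: p <:+ r ++ q₀ := by rw [heq]; exact List.suffix_append r q₀
          exact hw.2 a p hsuf
        | cons c r₃ =>
          rw [List.map_cons, List.cons_append] at heq
          obtain ⟨ha, hp⟩ : a = fl j β c ∧ p = r₃.map (fl j β) ++ q₀ := by
            constructor <;> injection heq
          subst ha; subst hp
          have hsuf : c :: (r₃ ++ q₀) <:+ r ++ q₀ := by
            obtain ⟨s, rfl⟩ := hr''
            exact ⟨s, by simp⟩
          have hc := hw.2 c (r₃ ++ q₀) hsuf
          obtain ⟨i0, x⟩ := c
          by_cases hij : i0 = j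
          · subst hij
            rw [fl_mk]
            rw [upd_FL i0 q₀ β hfix, Function.update_self]
            exact fun hcon => hc (hinj hcon)
          · rw [fl_ne j β (show (⟨i0, x⟩ : Letter V).1 ≠ j from hij)]
            rw [upd_FL j q₀ β hfix,
              Function.update_of_ne (show (⟨i0, x⟩ : Letter V).1 ≠ j from hij)]
            exact hc
  · rwa [FL_of_not_suffix j q₀ β h]

lemma pre_FL (G : ∀ i, SimpleGraph (V i)) (hfix : β (upd u q₀ j) = upd u q₀ j)
    (hadj : ∀ a b : V j, (G j).Adj a b → (G j).Adj (β a) (β b))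
    {v w : List (Letter V)} (h : Pre G u v w) :
    Pre G u (FL j q₀ β v) (FL j q₀ β w) := by
  rcases h with ⟨p, i0, a, b, hab, rfl, rfl⟩ | ⟨i0, a, ha, rfl⟩
  · by_cases hp : q₀ <:+ p
    · rw [FL_cons j q₀ β hp, FL_cons j q₀ β hp]
      by_cases hij : i0 = j
      · subst hij
        rw [fl_mk, fl_mk]
        exact Or.inl ⟨FL i0 q₀ β p, i0, β a, β b, hadj _ _ hab, rfl, rfl⟩
      · rw [fl_ne j β (show (⟨i0, a⟩ : Letter V).1 ≠ j from hij),
          fl_ne j β (show (⟨i0, b⟩ : Letter V).1 ≠ j from hij)]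
        exact Or.inl ⟨FL j q₀ β p, i0, a, b, hab, rfl, rfl⟩
    · rw [FL_cons_not j q₀ β hp, FL_cons_not j q₀ β hp]
      exact Or.inl ⟨p, i0, a, b, hab, rfl, rfl⟩
  · by_cases hv : q₀ <:+ v
    · rw [FL_cons j q₀ β hv]
      obtain ⟨r, rfl⟩ := hv
      rw [FL_append]
      by_cases hij : i0 = j
      · subst hij
        rw [fl_mk]
        refine Or.inr ⟨i0, β a, ?_, rfl⟩
        rw [upd_FL i0 q₀ β hfix, Function.update_self]
        exact hadj _ _ ha
      · rw [fl_ne j β (show (⟨i0, a⟩ : Letter V).1 ≠ j from hij)]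
        refine Or.inr ⟨i0, a, ?_, rfl⟩
        rw [upd_FL j q₀ β hfix, Function.update_of_ne hij]
        exact ha
    · rw [FL_of_not_suffix j q₀ β hv, FL_cons_not j q₀ β hv]
      exact Or.inr ⟨i0, a, ha, rfl⟩

end Aux2
section Aux3

variable {V : ι → Type} {u : ∀ i, V i} (G : ∀ i, SimpleGraph (V i))

lemma adj_of_pre {v w : Word u} (hne : v.1 ≠ w.1) (h : Pre G u v.1 w.1) :
    (freeProd G u).Adj v w :=
  (SimpleGraph.fromRel_adj _ v w).2 ⟨fun hc => hne (congrArg Subtype.val hc), Or.inl h⟩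

lemma len_le_of_adj {v w : Word u} (h : (freeProd G u).Adj v w) :
    w.1.length ≤ v.1.length + 1 := by
  obtain ⟨-, h | h⟩ := (SimpleGraph.fromRel_adj (fun v w : Word u => Pre G u v.1 w.1) v w).1 h
  · rcases h with ⟨p, i0, a, b, _, hv, hw⟩ | ⟨i0, a, _, hw⟩
    · rw [hv, hw]; simp
    · rw [hw]; simp
  · rcases h with ⟨p, i0, a, b, _, hw, hv⟩ | ⟨i0, a, _, hv⟩
    · rw [hv, hw]; simp
    · rw [hv]; simp; omega

lemma len_le_walk {v w : Word u} (p : (freeProd G u).Walk v w) :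
    w.1.length ≤ v.1.length + p.length := by
  induction p with
  | nil => simp
  | cons h p ih =>
    have := len_le_of_adj G h
    simp only [SimpleGraph.Walk.length_cons]
    omega

lemma reach_same (i0 : ι) {l : List (Letter V)} (hl : Adm u l)
    (hh : ∀ b ∈ l.head?, b.1 ≠ i0) :
    ∀ {y x : V i0} (q : (G i0).Walk y x), upd u l i0 ∉ q.support →
      (hy : Adm u (⟨i0, y⟩ :: l)) → (hx : Adm u (⟨i0, x⟩ :: l)) →
      (freeProd G u).Reachable ⟨⟨i0, y⟩ :: l, hy⟩ ⟨⟨i0, x⟩ :: l, hx⟩ := by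
    intro y x q
    induction q with
    | nil => intro _ hy hx; rfl
    | @cons y z x hadj q ih =>
      intro hsup hy hx
      have hzsup : upd u l i0 ∉ q.support := fun hc => hsup (List.mem_cons_of_mem _ hc)
      have hz : z ≠ upd u l i0 := fun hc => hzsup (hc ▸ q.start_mem_support)
      have hzadm : Adm u (⟨i0, z⟩ :: l) := adm_cons hl hh hz
      have hyz : ((⟨⟨i0, y⟩ :: l, hy⟩ : Word u)).1 ≠ ((⟨⟨i0, z⟩ :: l, hzadm⟩ : Word u)).1 := by
        intro hc
        have : y = z := by
          have := List.head_eq_of_cons_eq hc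
          simpa using this
        exact hadj.ne this
      have hedge : (freeProd G u).Adj ⟨⟨i0, y⟩ :: l, hy⟩ ⟨⟨i0, z⟩ :: l, hzadm⟩ :=
        adj_of_pre G hyz (Or.inl ⟨l, i0, y, z, hadj, rfl, rfl⟩)
      exact hedge.reachable.trans (ih hzsup hzadm hx)

lemma reach (hconn : ∀ i, (G i).Connected) :
    ∀ (l : List (Letter V)) (hl : Adm u l),
      (freeProd G u).Reachable (emptyWord u) ⟨l, hl⟩ := by
  intro l
  induction l with
  | nil => intro hl; rfl
  | cons a l ih =>
    intro hl
    have hl' : Adm u l := adm_tail hl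
    refine (ih hl').trans ?_
    obtain ⟨i0, x⟩ := a
    have hx : x ≠ upd u l i0 := adm_head hl
    have hh : ∀ b ∈ l.head?, b.1 ≠ i0 := adm_head_fst hl
    haveI := Classical.decEq (V i0)
    obtain ⟨w0⟩ := (hconn i0).preconnected (upd u l i0) x
    set q : (G i0).Path (upd u l i0) x := w0.toPath with hq
    have hnd : (q : (G i0).Walk (upd u l i0) x).support.Nodup := q.2.support_nodup
    have htail : upd u l i0 ∉ (q : (G i0).Walk (upd u l i0) x).support.tail := by
      have := (q : (G i0).Walk (upd u l i0) x).support_eq_cons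
      rw [this] at hnd
      exact (List.nodup_cons.1 hnd).1
    cases hq2 : (q : (G i0).Walk (upd u l i0) x) with
    | nil => exact absurd rfl hx
    | @cons _ z _ hadj q' =>
      have hzsup : upd u l i0 ∉ q'.support := by
        rw [hq2] at htail
        simpa using htail
      have hz : z ≠ upd u l i0 := fun hc => hzsup (hc ▸ q'.start_mem_support)
      have hzadm : Adm u (⟨i0, z⟩ :: l) := adm_cons hl' hh hz
      have hfirst : (freeProd G u).Adj ⟨l, hl'⟩ ⟨⟨i0, z⟩ :: l, hzadm⟩ := by
        refine adj_of_pre G ?_ (Or.inr ⟨i0, z, hadj, rfl⟩)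
        · intro hc
          have := congrArg List.length hc
          simp at this
      exact hfirst.reachable.trans (reach_same G i0 hl' hh q' hzsup hzadm hl)
  
end Aux3
section Aux4

variable {V : ι → Type} {u : ∀ i, V i}

lemma exists_long (i j : ι) (hij : i ≠ j) [Nontrivial (V i)] [Nontrivial (V j)] :
    ∀ m : ℕ, ∃ w : List (Letter V), Adm u w ∧ w.length = 2 * m ∧ ∀ a ∈ w.head?, a.1 = i := by
  intro m
  induction m with
  | zero => exact ⟨[], adm_nil, rfl, by simp⟩
  | succ m ih =>
    obtain ⟨w, hadm, hlen, hhead⟩ := ih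
    obtain ⟨z, hz⟩ := exists_ne (upd u w j)
    have h1 : Adm u (⟨j, z⟩ :: w) :=
      adm_cons hadm (fun b hb => by rw [hhead b hb]; exact hij) hz
    obtain ⟨y, hy⟩ := exists_ne (upd u (⟨j, z⟩ :: w) i)
    have h2 : Adm u (⟨i, y⟩ :: ⟨j, z⟩ :: w) :=
      adm_cons h1 (by intro b hb; simp only [List.head?_cons, Option.mem_def,
        Option.some.injEq] at hb; subst hb; exact Ne.symm hij) hy
    refine ⟨_, h2, ?_, ?_⟩
    · simp only [List.length_cons, hlen]; omega
    · intro a ha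
      simp only [List.head?_cons, Option.mem_def, Option.some.injEq] at ha
      subst ha; rfl

end Aux4


/-- If some factor of a free product of at least two connected graphs (each
with at least two vertices) has a nontrivial vertex stabiliser, then the
automorphism group of the free product is non-discrete: for every `k` there
is a nontrivial automorphism fixing the ball of radius `k` around `∅`
pointwise. -/
theorem stmt17 {n : ℕ} (hn : 2 ≤ n) {V : Fin n → Type} (G : ∀ i, SimpleGraph (V i))
    (u : ∀ i, V i) (hconn : ∀ i, (G i).Connected) (hnt : ∀ i, Nontrivial (V i))
    (j : Fin n) (u' : V j) (α : G j ≃g G j) (hfix : α u' = u')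
    (hα : ∃ x : V j, α x ≠ x) :
    ∀ k : ℕ, ∃ φ : freeProd G u ≃g freeProd G u,
      (∀ v : Word u, (freeProd G u).dist (emptyWord u) v ≤ k → φ v = v) ∧
      ∃ w : Word u, φ w ≠ w := by
  intro k
  haveI : Nontrivial (Fin n) := Fin.nontrivial_iff_two_le.2 hn
  obtain ⟨i, hij⟩ := exists_ne j
  haveI := hnt i; haveI := hnt j
  obtain ⟨w0, hadm0, hlen0, hhead0⟩ := exists_long (u := u) i j hij (k + 1)
  obtain ⟨q₀, q₁, hq1adm, hsuf01, hupd1, hupd0, hlen, hhead1⟩ :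
      ∃ q₀ q₁ : List (Letter V), Adm u q₁ ∧ q₀ <:+ q₁ ∧ upd u q₁ j = u' ∧
        upd u q₀ j = u' ∧ k + 1 ≤ q₀.length ∧ ∀ b ∈ q₁.head?, b.1 ≠ j := by
    by_cases hcase : upd u w0 j = u'
    · exact ⟨w0, w0, hadm0, List.suffix_refl _, hcase, hcase, by omega,
        fun b hb => by rw [hhead0 b hb]; exact hij⟩
    · obtain ⟨y, hy⟩ := exists_ne (upd u ((⟨j, u'⟩ : Letter V) :: w0) i)
      have hadmq₀ : Adm u ((⟨j, u'⟩ : Letter V) :: w0) :=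
        adm_cons hadm0 (fun b hb => by rw [hhead0 b hb]; exact hij)
          (fun hc => hcase hc.symm)
      have hadmq₁ : Adm u ((⟨i, y⟩ : Letter V) :: ⟨j, u'⟩ :: w0) :=
        adm_cons hadmq₀ (by intro b hb; simp only [List.head?_cons, Option.mem_def,
          Option.some.injEq] at hb; subst hb; exact Ne.symm hij) hy
      have h0 : upd u ((⟨j, u'⟩ : Letter V) :: w0) j = u' := by
        rw [upd_cons, Function.update_self]
      have h1 : upd u ((⟨i, y⟩ : Letter V) :: ⟨j, u'⟩ :: w0) j = u' := by
        rw [upd_cons, Function.update_of_ne (Ne.symm hij), h0]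
      refine ⟨_, _, hadmq₁, List.suffix_cons _ _, h1, h0, ?_, ?_⟩
      · simp only [List.length_cons, hlen0]; omega
      · intro b hb
        simp only [List.head?_cons, Option.mem_def, Option.some.injEq] at hb
        subst hb; exact hij
  obtain ⟨x₀, hx₀⟩ := hα
  have hx₀u' : x₀ ≠ u' := fun hc => hx₀ (by rw [hc, hfix, ← hc])
  have hfixα : (⇑α) (upd u q₀ j) = upd u q₀ j := by rw [hupd0]; exact hfix
  have hfixu'σ : α.symm u' = u' := by conv_lhs => rw [← hfix]
                                      exact α.symm_apply_apply u'
  have hfixσ : (⇑α.symm) (upd u q₀ j) = upd u q₀ j := by rw [hupd0]; exact hfixu'σ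
  have hadjα : ∀ a b : V j, (G j).Adj a b → (G j).Adj (α a) (α b) :=
    fun a b h => α.map_adj_iff.2 h
  have hadjσ : ∀ a b : V j, (G j).Adj a b → (G j).Adj (α.symm a) (α.symm b) :=
    fun a b h => α.symm.map_adj_iff.2 h
  have hcompσα : (⇑α.symm ∘ ⇑α) = id := funext fun x => α.symm_apply_apply x
  have hcompασ : (⇑α ∘ ⇑α.symm) = id := funext fun x => α.apply_symm_apply x
  let F : Word u → Word u :=
    fun w => ⟨FL j q₀ (⇑α) w.1, adm_FL j q₀ _ hfixα α.injective w.2⟩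
  let F' : Word u → Word u :=
    fun w => ⟨FL j q₀ (⇑α.symm) w.1, adm_FL j q₀ _ hfixσ α.symm.injective w.2⟩
  have hFF' : ∀ w, F (F' w) = w := fun w => Subtype.ext (by
    show FL j q₀ (⇑α) (FL j q₀ (⇑α.symm) w.1) = w.1
    rw [FL_FL, hcompασ, FL_id])
  have hF'F : ∀ w, F' (F w) = w := fun w => Subtype.ext (by
    show FL j q₀ (⇑α.symm) (FL j q₀ (⇑α) w.1) = w.1
    rw [FL_FL, hcompσα, FL_id])
  have hFinj : Function.Injective F := Function.LeftInverse.injective hF'F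
  have hF'inj : Function.Injective F' := Function.LeftInverse.injective hFF'
  have monoα : ∀ v w : Word u, (freeProd G u).Adj v w → (freeProd G u).Adj (F v) (F w) := by
    intro v w h
    obtain ⟨hne, hp⟩ := (SimpleGraph.fromRel_adj (fun v w : Word u => Pre G u v.1 w.1) v w).1 h
    refine (SimpleGraph.fromRel_adj (fun v w : Word u => Pre G u v.1 w.1) (F v) (F w)).2
      ⟨fun hc => hne (hFinj hc), ?_⟩
    rcases hp with hp | hp
    · exact Or.inl (pre_FL j q₀ _ G hfixα hadjα hp)
    · exact Or.inr (pre_FL j q₀ _ G hfixα hadjα hp)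
  have monoσ : ∀ v w : Word u, (freeProd G u).Adj v w → (freeProd G u).Adj (F' v) (F' w) := by
    intro v w h
    obtain ⟨hne, hp⟩ := (SimpleGraph.fromRel_adj (fun v w : Word u => Pre G u v.1 w.1) v w).1 h
    refine (SimpleGraph.fromRel_adj (fun v w : Word u => Pre G u v.1 w.1) (F' v) (F' w)).2
      ⟨fun hc => hne (hF'inj hc), ?_⟩
    rcases hp with hp | hp
    · exact Or.inl (pre_FL j q₀ _ G hfixσ hadjσ hp)
    · exact Or.inr (pre_FL j q₀ _ G hfixσ hadjσ hp)
  let e : Word u ≃ Word u := ⟨F, F', hF'F, hFF'⟩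
  let φ : freeProd G u ≃g freeProd G u := by
    refine ⟨e, ?_⟩
    intro v w
    constructor
    · intro h
      have h2 := monoσ _ _ h
      rw [show F' (e v) = v from hF'F v, show F' (e w) = w from hF'F w] at h2
      exact h2
    · exact monoα v w
  refine ⟨φ, ?_, ?_⟩
  · intro v hdist
    by_contra hne
    have hsufv : q₀ <:+ v.1 := by
      by_contra hns
      exact hne (Subtype.ext (FL_of_not_suffix j q₀ _ hns))
    have hlenv : k + 1 ≤ v.1.length :=
      le_trans hlen (List.IsSuffix.length_le hsufv)
    have hreach : (freeProd G u).Reachable (emptyWord u) v := reach G hconn v.1 v.2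
    obtain ⟨p, hp⟩ := hreach.exists_walk_length_eq_dist
    have hwl := len_le_walk G p
    rw [hp] at hwl
    have h0 : (emptyWord u).1.length = 0 := rfl
    omega
  · have hx0ne : x₀ ≠ upd u q₁ j := by rw [hupd1]; exact hx₀u'
    have hadmw : Adm u ((⟨j, x₀⟩ : Letter V) :: q₁) := adm_cons hq1adm hhead1 hx0ne
    refine ⟨⟨(⟨j, x₀⟩ : Letter V) :: q₁, hadmw⟩, ?_⟩
    intro hc
    have hc1 : FL j q₀ (⇑α) ((⟨j, x₀⟩ : Letter V) :: q₁) = (⟨j, x₀⟩ : Letter V) :: q₁ :=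
      congrArg Subtype.val hc
    rw [FL_cons j q₀ _ hsuf01, fl_mk] at hc1
    have hhd : (⟨j, α x₀⟩ : Letter V) = ⟨j, x₀⟩ := by injection hc1
    have : α x₀ = x₀ := by simpa using hhd
    exact hx₀ this
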